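/- Let X be a compact Ptolemy space with properties (E) and (sI). Then any two distinct Ptolemy circles in X have at most two points in common. -/

import Mathlib

/-- Projective equality of triples of reals, i.e. equality in `ℝP²`. -/
def ProjEq (a b : ℝ × ℝ × ℝ) : Prop :=
  ∃ c : ℝ, 0 < c ∧ b.1 = c * a.1 ∧ b.2.1 = c * a.2.1 ∧ b.2.2 = c * a.2.2

/-- A quadruple is admissible if no entry occurs three or four times. -/
def Admissible {X : Type*} (x y z u : X) : Prop :=
  ¬ ((x = y ∧ y = z) ∨ (x = y ∧ y = u) ∨ (x = z ∧ z = u) ∨ (y = z ∧ z = u))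

open scoped Classical in
/-- The cross-ratio triple of a quadruple with respect to an extended metric `d` with
infinitely remote point `ω`, with the standard conventions when `ω` occurs among the
entries: e.g. `crt(x,y,z,ω) = (d(x,y) : d(x,z) : d(y,z))` and `crt(x,y,ω,ω) = (0:1:1)`. -/
noncomputable def crt {X : Type*} (d : X → X → ℝ) (ω x y z u : X) : ℝ × ℝ × ℝ :=
  if x = ω then
    (if y = ω then ((0 : ℝ), 1, 1) else if z = ω then ((1 : ℝ), 0, 1)
      else if u = ω then ((1 : ℝ), 1, 0) else (d z u, d y u, d y z))
  else if y = ω then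
    (if z = ω then ((1 : ℝ), 1, 0) else if u = ω then ((1 : ℝ), 0, 1)
      else (d z u, d x z, d x u))
  else if z = ω then
    (if u = ω then ((0 : ℝ), 1, 1) else (d x y, d y u, d x u))
  else if u = ω then (d x y, d x z, d y z)
  else (d x y * d z u, d x z * d y u, d x u * d y z)


/-- A Möbius structure on a compact space `X`: for every point `ω` a metric
`dist ω : X → X → ℝ` on `X \ {ω}` having `ω` as infinitely remote point, all metrics
pairwise Möbius equivalent, each satisfying the Ptolemy inequality, and compatible
with the topology of `X`. -/
structure MoebiusStructure (X : Type*) [TopologicalSpace X] where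
  dist : X → X → X → ℝ
  dist_self : ∀ ω x, dist ω x x = 0
  dist_comm : ∀ ω x y, dist ω x y = dist ω y x
  dist_pos : ∀ ω x y, x ≠ ω → y ≠ ω → x ≠ y → 0 < dist ω x y
  dist_triangle : ∀ ω x y z, x ≠ ω → y ≠ ω → z ≠ ω →
    dist ω x z ≤ dist ω x y + dist ω y z
  ptolemy : ∀ ω x y z u, x ≠ ω → y ≠ ω → z ≠ ω → u ≠ ω →
    dist ω x z * dist ω y u ≤ dist ω x y * dist ω z u + dist ω x u * dist ω y z
  moebius_equivalent : ∀ ω ω' x y z u, Admissible x y z u →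
    ProjEq (crt (dist ω) ω x y z u) (crt (dist ω') ω' x y z u)
  isOpen_ball : ∀ ω x r, x ≠ ω → IsOpen {y | y ≠ ω ∧ dist ω x y < r}
  isOpen_compl_closedBall : ∀ ω x r, x ≠ ω →
    IsOpen ({y | y ≠ ω ∧ r < dist ω x y} ∪ {ω})
  nhds_basis : ∀ ω x, x ≠ ω → ∀ U ∈ nhds x, ∃ r > 0, {y | y ≠ ω ∧ dist ω x y < r} ⊆ U

namespace MoebiusStructure

variable {X : Type*} [TopologicalSpace X] (S : MoebiusStructure X)

/-- A Möbius map of `(X, S)`: preserves all cross-ratio triples. -/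
def IsMoebiusMap (φ : X → X) : Prop :=
  ∀ ω x y z u, Admissible x y z u →
    ProjEq (crt (S.dist ω) ω x y z u) (crt (S.dist ω) ω (φ x) (φ y) (φ z) (φ u))

/-- `(x,z)` separates `(y,u)` on `σ`: `y` and `u` lie in different connected components
of `σ \ {x,z}`. -/
def Separates (σ : Set X) (x z y u : X) : Prop :=
  ∀ C : Set X, IsPreconnected C → C ⊆ σ \ {x, z} → ¬(y ∈ C ∧ u ∈ C)

/-- A Ptolemy circle: a subset homeomorphic to `S¹` on which the Ptolemy equality holds
for every quadruple of distinct points with separated diagonal. -/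
def IsPtolemyCircle (σ : Set X) : Prop :=
  Nonempty (σ ≃ₜ Metric.sphere (0 : ℂ) 1) ∧
    ∀ ω, ∀ x ∈ σ, ∀ y ∈ σ, ∀ z ∈ σ, ∀ u ∈ σ,
      x ≠ ω → y ≠ ω → z ≠ ω → u ≠ ω →
      x ≠ y → x ≠ z → x ≠ u → y ≠ z → y ≠ u → z ≠ u →
      Separates σ x z y u →
      S.dist ω x z * S.dist ω y u =
        S.dist ω x y * S.dist ω z u + S.dist ω x u * S.dist ω y z

/-- A Ptolemy line in `X_ω`: a Ptolemy circle through `ω` with `ω` removed. -/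
def IsPtolemyLine (ω : X) (ℓ : Set X) : Prop :=
  ∃ σ : Set X, S.IsPtolemyCircle σ ∧ ω ∈ σ ∧ ℓ = σ \ {ω}

/-- A metric sphere between `ω` and `ω'`: a sphere of positive radius centered at `ω`
for the metric with infinitely remote point `ω'`. -/
def IsSphereBetween (ω ω' : X) (Sp : Set X) : Prop :=
  ∃ r : ℝ, 0 < r ∧ Sp = {x | x ≠ ω' ∧ S.dist ω' ω x = r}

/-- A strong space inversion w.r.t. `ω`, `ω'` and a metric sphere `Sp` between them:
a Möbius involution swapping `ω` and `ω'`, fixing `Sp` pointwise, and preserving every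
Ptolemy circle through `ω` and `ω'`. -/
def IsStrongInversion (ω ω' : X) (Sp : Set X) (φ : X → X) : Prop :=
  S.IsMoebiusMap φ ∧ Function.Bijective φ ∧ φ ∘ φ = id ∧
    φ ω = ω' ∧ φ ω' = ω ∧ (∀ x ∈ Sp, φ x = x) ∧
    ∀ σ : Set X, S.IsPtolemyCircle σ → ω ∈ σ → ω' ∈ σ → φ '' σ = σ

/-- Property (E): existence of a Ptolemy circle. -/
def PropE : Prop := ∃ σ : Set X, S.IsPtolemyCircle σ

/-- Property (sI): existence of strong space inversions for every pair of distinct points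
and every metric sphere between them. -/
def PropSI : Prop :=
  ∀ ω ω' : X, ω ≠ ω' → ∀ Sp : Set X, S.IsSphereBetween ω ω' Sp →
    ∃ φ : X → X, S.IsStrongInversion ω ω' Sp φ

end MoebiusStructure

/- ------------------------------------------------------------------ -/
/- Auxiliary development for the proof                                 -/
/- ------------------------------------------------------------------ -/

section Auxiliary

open Set

private lemma projEq_elim {A B C A' B' C' : ℝ} (h : ProjEq (A, B, C) (A', B', C')) :
    ∃ c : ℝ, 0 < c ∧ A' = c * A ∧ B' = c * B ∧ C' = c * C := h

private lemma admissible_of_ne {Y : Type*} {x y z u : Y}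
    (h1 : x ≠ y) (h2 : x ≠ z) (h3 : y ≠ z) : Admissible x y z u := by
  simp [Admissible, h1, h2, h3]

private lemma crt_of_ne {Y : Type*} (d : Y → Y → ℝ) {ω x y z u : Y}
    (hx : x ≠ ω) (hy : y ≠ ω) (hz : z ≠ ω) (hu : u ≠ ω) :
    crt d ω x y z u = (d x y * d z u, d x z * d y u, d x u * d y z) := by
  simp [crt, hx, hy, hz, hu]

private lemma crt_first {Y : Type*} (d : Y → Y → ℝ) {ω y z u : Y}
    (hy : y ≠ ω) (hz : z ≠ ω) (hu : u ≠ ω) :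
    crt d ω ω y z u = (d z u, d y u, d y z) := by
  simp [crt, hy, hz, hu]

private lemma crt_second {Y : Type*} (d : Y → Y → ℝ) {ω x z u : Y}
    (hx : x ≠ ω) (hz : z ≠ ω) (hu : u ≠ ω) :
    crt d ω x ω z u = (d z u, d x z, d x u) := by
  simp [crt, hx, hz, hu]

private lemma crt_last {Y : Type*} (d : Y → Y → ℝ) {ω x y z : Y}
    (hx : x ≠ ω) (hy : y ≠ ω) (hz : z ≠ ω) :
    crt d ω x y z ω = (d x y, d x z, d y z) := by
  simp [crt, hx, hy, hz]

private lemma isCompact_circle {X : Type*} [TopologicalSpace X] {σ : Set X}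
    (h : Nonempty (σ ≃ₜ Metric.sphere (0 : ℂ) 1)) : IsCompact σ := by
  obtain ⟨e⟩ := h
  have hrange : σ = Set.range (Subtype.val ∘ e.symm) := by
    ext x
    constructor
    · intro hx
      exact ⟨e ⟨x, hx⟩, by simp⟩
    · rintro ⟨z, rfl⟩
      exact (e.symm z).2
  have : CompactSpace (Metric.sphere (0 : ℂ) 1) :=
    isCompact_iff_compactSpace.mp (isCompact_sphere 0 1)
  rw [hrange]
  exact isCompact_range (continuous_subtype_val.comp e.symm.continuous)

private lemma f_arg_eq {z : ℂ} (h1 : ‖z‖ = 1) :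
    (Real.cos (Complex.arg z) : ℂ) + (Real.sin (Complex.arg z) : ℂ) * Complex.I = z := by
  have hz : z ≠ 0 := by
    intro h
    rw [h] at h1
    simp at h1
  rw [Complex.cos_arg hz, Complex.sin_arg, h1, div_one, div_one]
  exact Complex.re_add_im z

private lemma arg_lt_pi_of {z : ℂ} (h1 : ‖z‖ = 1) (hz : z ≠ -1) :
    Complex.arg z < Real.pi := by
  rcases lt_or_eq_of_le (Complex.arg_le_pi z) with h | h
  · exact h
  exfalso
  obtain ⟨hre, him⟩ := Complex.arg_eq_pi_iff.mp h
  apply hz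
  have h2 : ‖z‖ ^ 2 = 1 := by rw [h1]; norm_num
  rw [Complex.sq_norm, Complex.normSq_apply, him] at h2
  have hre1 : z.re = -1 := by nlinarith
  apply Complex.ext <;> simp [hre1, him]

/-- Coordinates on a Ptolemy circle minus a point. -/
private lemma circle_coord {X : Type*} [TopologicalSpace X] [T2Space X] {σ : Set X}
    (hσ : Nonempty (σ ≃ₜ Metric.sphere (0 : ℂ) 1)) {a : X} (ha : a ∈ σ) :
    ∃ (E : X → ℝ) (γ : ℝ → X), Continuous γ ∧ (∀ t, γ t ∈ σ) ∧ (∀ t, γ t ≠ a) ∧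
      (∀ t, E (γ t) = t) ∧ (∀ x, x ∈ σ → x ≠ a → γ (E x) = x) ∧
      ContinuousOn E (σ \ {a}) ∧
      (∀ K : Set X, K ⊆ σ → a ∉ K → IsClosed K → BddAbove (E '' K) ∧ BddBelow (E '' K)) ∧
      (∀ x y z : X, x ∈ σ → y ∈ σ → z ∈ σ → x ≠ a → y ≠ a → z ≠ a →
        E x < E y → E y < E z → MoebiusStructure.Separates σ x z y a) := by
  classical
  obtain ⟨h₁⟩ := hσ
  have hcomp : IsCompact σ := isCompact_circle ⟨h₁⟩
  set p : Metric.sphere (0 : ℂ) 1 := h₁ ⟨a, ha⟩ with hpdef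
  have hpabs : ‖(p : ℂ)‖ = 1 := by
    have := p.2
    rw [mem_sphere_zero_iff_norm] at this
    exact this
  have hp0 : (p : ℂ) ≠ 0 := by
    intro h
    rw [h] at hpabs
    simp at hpabs
  set u : ℂ := -(p : ℂ)⁻¹ with hudef
  have hu0 : u ≠ 0 := by
    rw [hudef]
    simp [hp0]
  have hup : u * (p : ℂ) = -1 := by
    rw [hudef]
    field_simp
  have huabs : ‖u‖ = 1 := by
    rw [hudef]
    rw [norm_neg, norm_inv, hpabs]
    norm_num
  -- the forward stereographic-type coordinate
  set j : ↥(σ \ {a}) → Metric.sphere (0 : ℂ) 1 := fun w => h₁ ⟨w.1, w.2.1⟩ with hjdef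
  have hjp : ∀ w, j w ≠ p := by
    intro w h
    have := h₁.injective h
    have hw := w.2.2
    apply hw
    have : w.1 = a := congrArg Subtype.val this
    simp [this]
  have hjabs : ∀ w, ‖u * (j w : ℂ)‖ = 1 := by
    intro w
    have hj : ‖((j w : ℂ))‖ = 1 := by
      have := (j w).2
      rw [mem_sphere_zero_iff_norm] at this
      exact this
    rw [norm_mul, huabs, hj, one_mul]
  have hjne : ∀ w, u * (j w : ℂ) ≠ -1 := by
    intro w h
    apply hjp w
    apply Subtype.ext
    have := h.trans hup.symm
    exact mul_left_cancel₀ hu0 this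
  have hargIoo : ∀ w, Complex.arg (u * (j w : ℂ)) ∈ Set.Ioo (-Real.pi) Real.pi :=
    fun w => ⟨Complex.neg_pi_lt_arg _, arg_lt_pi_of (hjabs w) (hjne w)⟩
  set A : ↥(σ \ {a}) → ℝ := fun w => Real.tan (Complex.arg (u * (j w : ℂ)) / 2) with hAdef
  -- the inverse map
  set f : ℝ → ℂ := fun θ => (Real.cos θ : ℂ) + (Real.sin θ : ℂ) * Complex.I with hfdef
  have hfc : ∀ θ : ℝ, f θ = Complex.cos (θ : ℂ) + Complex.sin (θ : ℂ) * Complex.I := by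
    intro θ
    rw [hfdef]
    simp only []
    rw [Complex.ofReal_cos, Complex.ofReal_sin]
  have hfabs : ∀ θ, ‖f θ‖ = 1 := fun θ => by
    rw [hfc]
    exact Complex.norm_cos_add_sin_mul_I θ
  have hθIoo : ∀ t : ℝ, 2 * Real.arctan t ∈ Set.Ioo (-Real.pi) Real.pi := by
    intro t
    have h1 := Real.arctan_lt_pi_div_two t
    have h2 := Real.neg_pi_div_two_lt_arctan t
    constructor <;> [linarith; linarith]
  have hfarg : ∀ t : ℝ, Complex.arg (f (2 * Real.arctan t)) = 2 * Real.arctan t := by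
    intro t
    rw [hfc]
    exact Complex.arg_cos_add_sin_mul_I ⟨(hθIoo t).1, (hθIoo t).2.le⟩
  set B0 : ℝ → ℂ := fun t => u⁻¹ * f (2 * Real.arctan t) with hB0def
  have hB0abs : ∀ t, ‖B0 t‖ = 1 := by
    intro t
    rw [hB0def]
    simp only []
    rw [norm_mul, norm_inv, huabs, hfabs]
    norm_num
  have hB0sph : ∀ t, B0 t ∈ Metric.sphere (0 : ℂ) 1 := by
    intro t
    rw [mem_sphere_zero_iff_norm]
    exact hB0abs t
  have hB0p : ∀ t, B0 t ≠ (p : ℂ) := by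
    intro t h
    have h2 : f (2 * Real.arctan t) = u * (p : ℂ) := by
      rw [← h, hB0def]
      field_simp
    rw [hup] at h2
    have h3 := hfarg t
    rw [h2, Complex.arg_neg_one] at h3
    have := (hθIoo t).2
    linarith
  set Bs : ℝ → ↥σ := fun t => h₁.symm ⟨B0 t, hB0sph t⟩ with hBsdef
  have hBsa : ∀ t, ((Bs t : ↥σ) : X) ≠ a := by
    intro t h
    have : Bs t = ⟨a, ha⟩ := Subtype.ext h
    have h2 : (⟨B0 t, hB0sph t⟩ : Metric.sphere (0 : ℂ) 1) = p := by
      rw [hpdef, ← this, hBsdef]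
      exact (h₁.apply_symm_apply _).symm
    exact hB0p t (congrArg Subtype.val h2)
  set B : ℝ → ↥(σ \ {a}) := fun t => ⟨(Bs t : ↥σ), ⟨(Bs t).2, hBsa t⟩⟩ with hBdef
  -- inverse properties
  have hjB : ∀ t, j (B t) = ⟨B0 t, hB0sph t⟩ := by
    intro t
    show h₁ ⟨(Bs t : ↥σ), (Bs t).2⟩ = _
    have : (⟨(Bs t : ↥σ), (Bs t).2⟩ : ↥σ) = Bs t := rfl
    rw [this, hBsdef]
    exact h₁.apply_symm_apply _
  have hAB : ∀ t, A (B t) = t := by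
    intro t
    rw [hAdef]
    simp only []
    rw [hjB t]
    have : u * (B0 t) = f (2 * Real.arctan t) := by
      rw [hB0def]
      field_simp
    show Real.tan (Complex.arg (u * (B0 t)) / 2) = t
    rw [this, hfarg t]
    rw [show 2 * Real.arctan t / 2 = Real.arctan t by ring]
    exact Real.tan_arctan t
  have hBA : ∀ w, B (A w) = w := by
    intro w
    have hIoo := hargIoo w
    have h1 : Complex.arg (u * (j w : ℂ)) / 2 ∈ Set.Ioo (-(Real.pi / 2)) (Real.pi / 2) := by
      constructor <;> [linarith [hIoo.1]; linarith [hIoo.2]]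
    have h2 : 2 * Real.arctan (A w) = Complex.arg (u * (j w : ℂ)) := by
      rw [hAdef]
      simp only []
      rw [Real.arctan_tan h1.1 h1.2]
      ring
    have h3 : f (2 * Real.arctan (A w)) = u * (j w : ℂ) := by
      rw [h2, hfdef]
      exact f_arg_eq (hjabs w)
    have h4 : B0 (A w) = (j w : ℂ) := by
      rw [hB0def]
      simp only []
      rw [h3]
      field_simp
    have h5 : Bs (A w) = ⟨(w : X), w.2.1⟩ := by
      rw [hBsdef]
      simp only []
      have : (⟨B0 (A w), hB0sph (A w)⟩ : Metric.sphere (0 : ℂ) 1) = j w := Subtype.ext h4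
      rw [this, hjdef]
      exact h₁.symm_apply_apply _
    apply Subtype.ext
    show ((Bs (A w) : ↥σ) : X) = (w : X)
    rw [h5]
  -- continuity
  have hjcont : Continuous fun w : ↥(σ \ {a}) => (j w : ℂ) := by
    apply continuous_subtype_val.comp
    apply h₁.continuous.comp
    exact Continuous.subtype_mk continuous_subtype_val _
  have hAcont : Continuous A := by
    rw [continuous_iff_continuousAt]
    intro w
    have hmul : ContinuousAt (fun w : ↥(σ \ {a}) => u * (j w : ℂ)) w :=
      continuousAt_const.mul hjcont.continuousAt
    have hslit : (u * (j w : ℂ)) ∈ Complex.slitPlane := by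
      rw [Complex.mem_slitPlane_iff_arg]
      refine ⟨(hargIoo w).2.ne, ?_⟩
      intro h0
      have := hjabs w
      rw [h0] at this
      simp at this
    have harg : ContinuousAt Complex.arg (u * (j w : ℂ)) := Complex.continuousAt_arg hslit
    have hcos : Real.cos (Complex.arg (u * (j w : ℂ)) / 2) ≠ 0 := by
      have hIoo := hargIoo w
      exact (Real.cos_pos_of_mem_Ioo ⟨by linarith [hIoo.1], by linarith [hIoo.2]⟩).ne'
    have htan : ContinuousAt Real.tan (Complex.arg (u * (j w : ℂ)) / 2) :=
      Real.continuousAt_tan.mpr hcos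
    have hh : ContinuousAt (fun w : ↥(σ \ {a}) => Complex.arg (u * (j w : ℂ)) / 2) w :=
      ContinuousAt.comp (g := fun z : ℂ => Complex.arg z / 2)
        (f := fun w : ↥(σ \ {a}) => u * (j w : ℂ)) (harg.div_const 2) hmul
    exact ContinuousAt.comp (g := Real.tan)
      (f := fun w : ↥(σ \ {a}) => Complex.arg (u * (j w : ℂ)) / 2) htan hh
  have hB0cont : Continuous B0 := by
    apply continuous_const.mul
    apply Continuous.add
    · exact Complex.continuous_ofReal.comp
        (Real.continuous_cos.comp (continuous_const.mul Real.continuous_arctan))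
    · exact (Complex.continuous_ofReal.comp
        (Real.continuous_sin.comp (continuous_const.mul Real.continuous_arctan))).mul
        continuous_const
  have hBcont : Continuous B := by
    apply Continuous.subtype_mk
    exact continuous_subtype_val.comp (h₁.symm.continuous.comp (Continuous.subtype_mk hB0cont _))
  let e : ↥(σ \ {a}) ≃ₜ ℝ :=
    { toFun := A, invFun := B, left_inv := hBA, right_inv := hAB,
      continuous_toFun := hAcont, continuous_invFun := hBcont }
  -- now the coordinates on X
  have hmemD : ∀ x, x ∈ σ → x ≠ a → x ∈ σ \ {a} := by
    intro x hx hxa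
    exact ⟨hx, by simp [hxa]⟩
  set E : X → ℝ := fun x => if h : x ∈ σ ∧ x ≠ a then e ⟨x, hmemD x h.1 h.2⟩ else 0 with hEdef
  set γ : ℝ → X := fun t => ((e.symm t : ↥(σ \ {a})) : X) with hγdef
  have hEeq : ∀ x (h : x ∈ σ ∧ x ≠ a), E x = e ⟨x, hmemD x h.1 h.2⟩ := by
    intro x h
    simp only [hEdef]
    rw [dif_pos h]
  have hγσ : ∀ t, γ t ∈ σ := fun t => (e.symm t).2.1
  have hγa : ∀ t, γ t ≠ a := by
    intro t
    have := (e.symm t).2.2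
    simpa using this
  have hEγ : ∀ t, E (γ t) = t := by
    intro t
    rw [hEeq (γ t) ⟨hγσ t, hγa t⟩]
    have : (⟨γ t, hmemD (γ t) (hγσ t) (hγa t)⟩ : ↥(σ \ {a})) = e.symm t := Subtype.ext rfl
    rw [this, e.apply_symm_apply]
  have hγE : ∀ x, x ∈ σ → x ≠ a → γ (E x) = x := by
    intro x hx hxa
    rw [hEeq x ⟨hx, hxa⟩]
    show ((e.symm (e ⟨x, hmemD x hx hxa⟩) : ↥(σ \ {a})) : X) = x
    rw [e.symm_apply_apply]
  have hEcont : ContinuousOn E (σ \ {a}) := by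
    rw [continuousOn_iff_continuous_restrict]
    have : (σ \ {a}).domRestrict E = fun w => e w := by
      funext w
      have hw : (w : X) ∈ σ ∧ (w : X) ≠ a := ⟨w.2.1, by have := w.2.2; simpa using this⟩
      show E (w : X) = e w
      rw [hEeq _ hw]
    rw [this]
    exact e.continuous
  have hbdd : ∀ K : Set X, K ⊆ σ → a ∉ K → IsClosed K →
      BddAbove (E '' K) ∧ BddBelow (E '' K) := by
    intro K hKσ haK hKcl
    have hKD : K ⊆ σ \ {a} := by
      intro x hx
      refine ⟨hKσ hx, ?_⟩
      simp only [Set.mem_singleton_iff]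
      rintro rfl
      exact haK hx
    have hKcomp : IsCompact K := hcomp.of_isClosed_subset hKcl hKσ
    have hpre : IsCompact (Subtype.val ⁻¹' K : Set ↥(σ \ {a})) := by
      rw [Subtype.isCompact_iff]
      have himg : Subtype.val '' (Subtype.val ⁻¹' K : Set ↥(σ \ {a})) = K := by
        ext x
        constructor
        · rintro ⟨w, hw, rfl⟩
          exact hw
        · intro hx
          exact ⟨⟨x, hKD hx⟩, hx, rfl⟩
      rwa [himg]
    have himgE : E '' K = ⇑e '' (Subtype.val ⁻¹' K) := by
      ext r
      constructor
      · rintro ⟨x, hx, rfl⟩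
        refine ⟨⟨x, hKD hx⟩, hx, ?_⟩
        rw [hEeq x ⟨hKσ hx, by have := (hKD hx).2; simpa using this⟩]
      · rintro ⟨w, hw, rfl⟩
        refine ⟨w.1, hw, ?_⟩
        rw [hEeq w.1 ⟨w.2.1, by have := w.2.2; simpa using this⟩]
    constructor
    · rw [himgE]
      exact (hpre.image e.continuous).bddAbove
    · rw [himgE]
      exact (hpre.image e.continuous).bddBelow
  have hγcont : Continuous γ := by
    rw [hγdef]
    exact continuous_subtype_val.comp e.symm.continuous
  have hsep : ∀ x y z : X, x ∈ σ → y ∈ σ → z ∈ σ → x ≠ a → y ≠ a → z ≠ a →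
      E x < E y → E y < E z → MoebiusStructure.Separates σ x z y a := by
    intro x y z hx hy hz hxa hya hza h1 h2
    intro C hC hCsub hyu
    obtain ⟨hyC, haC⟩ := hyu
    have hCσ : C ⊆ σ := fun w hw => (hCsub hw).1
    have hCpre : IsPreconnected (Subtype.val ⁻¹' C : Set ↥σ) := by
      have himg : Subtype.val '' (Subtype.val ⁻¹' C : Set ↥σ) = C := by
        ext w
        constructor
        · rintro ⟨v, hv, rfl⟩
          exact hv
        · intro hw
          exact ⟨⟨w, hCσ hw⟩, hw, rfl⟩
      exact Topology.IsInducing.subtypeVal.isPreconnected_image.mp (by rwa [himg])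
    set W : Set X := Subtype.val '' (⇑e ⁻¹' Set.Icc (E x) (E z) : Set ↥(σ \ {a})) with hWdef
    have hWcomp : IsCompact W := by
      have hic : IsCompact (⇑e ⁻¹' Set.Icc (E x) (E z) : Set ↥(σ \ {a})) :=
        e.isCompact_preimage.mpr isCompact_Icc
      exact hic.image continuous_subtype_val
    have hWa : a ∉ W := by
      rintro ⟨w, -, hval⟩
      exact absurd hval (by have := w.2.2; simpa using this)
    have hEOn : ContinuousOn (fun w : ↥σ => E (w : X)) {w : ↥σ | (w : X) ≠ a} := by
      apply hEcont.comp continuous_subtype_val.continuousOn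
      intro w hw
      exact ⟨w.2, hw⟩
    have hSopen : IsOpen {w : ↥σ | (w : X) ≠ a} := by
      have heq : {w : ↥σ | (w : X) ≠ a} = Subtype.val ⁻¹' ({a}ᶜ : Set X) := rfl
      rw [heq]
      exact isClosed_singleton.isOpen_compl.preimage continuous_subtype_val
    set V₁ : Set ↥σ := {w : ↥σ | (w : X) ≠ a} ∩
      (fun w : ↥σ => E (w : X)) ⁻¹' Set.Ioo (E x) (E z) with hV₁def
    have hV₁o : IsOpen V₁ := hEOn.isOpen_inter_preimage hSopen isOpen_Ioo
    set V₂ : Set ↥σ := Subtype.val ⁻¹' Wᶜ with hV₂def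
    have hV₂o : IsOpen V₂ := hWcomp.isClosed.isOpen_compl.preimage continuous_subtype_val
    have hmemW : ∀ w : X, w ∈ σ \ {a} → E w ∈ Set.Icc (E x) (E z) → w ∈ W := by
      intro w h hIcc
      refine ⟨⟨w, h⟩, ?_, rfl⟩
      rw [Set.mem_preimage,
        show (e ⟨w, h⟩ : ℝ) = E w from (hEeq w ⟨h.1, by have := h.2; simpa using this⟩).symm]
      exact hIcc
    have hcover : (Subtype.val ⁻¹' C : Set ↥σ) ⊆ V₁ ∪ V₂ := by
      intro w hw
      have hwC : (w : X) ∈ C := hw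
      have hwmem := hCsub hwC
      have hwxz : (w : X) ≠ x ∧ (w : X) ≠ z := by
        have := hwmem.2
        simp only [Set.mem_insert_iff, Set.mem_singleton_iff, not_or] at this
        exact this
      by_cases hwa : (w : X) = a
      · right
        show (w : X) ∈ Wᶜ
        rw [hwa]
        exact hWa
      · have hwD : (w : X) ∈ σ \ {a} := ⟨hwmem.1, by simp [hwa]⟩
        by_cases hIoo : E (w : X) ∈ Set.Ioo (E x) (E z)
        · left
          exact ⟨hwa, hIoo⟩
        · right
          show (w : X) ∈ Wᶜ
          intro hwW
          obtain ⟨v, hv, hval⟩ := hwW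
          have hveq : v = ⟨(w : X), hwD⟩ := Subtype.ext hval
          rw [hveq, Set.mem_preimage] at hv
          have hvE : E (w : X) ∈ Set.Icc (E x) (E z) := by
            rwa [show (e ⟨(w : X), hwD⟩ : ℝ) = E (w : X) from
              (hEeq _ ⟨hwD.1, by have := hwD.2; simpa using this⟩).symm] at hv
          have hedge : E (w : X) = E x ∨ E (w : X) = E z := by
            by_contra hcon
            push_neg at hcon
            exact hIoo ⟨lt_of_le_of_ne hvE.1 (Ne.symm hcon.1), lt_of_le_of_ne hvE.2 hcon.2⟩
          rcases hedge with h | h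
          · apply hwxz.1
            calc (w : X) = γ (E (w : X)) :=
                  (hγE _ hwD.1 (by have := hwD.2; simpa using this)).symm
            _ = γ (E x) := by rw [h]
            _ = x := hγE x hx hxa
          · apply hwxz.2
            calc (w : X) = γ (E (w : X)) :=
                  (hγE _ hwD.1 (by have := hwD.2; simpa using this)).symm
            _ = γ (E z) := by rw [h]
            _ = z := hγE z hz hza
    have hyV : (⟨y, hy⟩ : ↥σ) ∈ (Subtype.val ⁻¹' C : Set ↥σ) ∩ V₁ :=
      ⟨hyC, ⟨hya, ⟨h1, h2⟩⟩⟩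
    have haV : (⟨a, ha⟩ : ↥σ) ∈ (Subtype.val ⁻¹' C : Set ↥σ) ∩ V₂ := ⟨haC, hWa⟩
    obtain ⟨w, hwC, hwV₁, hwV₂⟩ := hCpre V₁ V₂ hV₁o hV₂o hcover ⟨_, hyV⟩ ⟨_, haV⟩
    apply hwV₂
    have hwD : (w : X) ∈ σ \ {a} := ⟨w.2, hwV₁.1⟩
    exact hmemW (w : X) hwD (Set.Ioo_subset_Icc_self hwV₁.2)
  exact ⟨E, γ, hγcont, hγσ, hγa, hEγ, hγE, hEcont, hbdd, hsep⟩

end Auxiliary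

private lemma geodesic {X : Type*} [TopologicalSpace X] (S : MoebiusStructure X) {σ : Set X}
    (hσ : S.IsPtolemyCircle σ) (hinf : σ.Infinite) {a x y z : X}
    (ha : a ∈ σ) (hx : x ∈ σ) (hy : y ∈ σ) (hz : z ∈ σ)
    (hxa : x ≠ a) (hya : y ≠ a) (hza : z ≠ a)
    (hxy : x ≠ y) (hxz : x ≠ z) (hyz : y ≠ z)
    (hsep : MoebiusStructure.Separates σ x z y a) :
    S.dist a x z = S.dist a x y + S.dist a y z := by
  obtain ⟨ω, hωσ, hωn⟩ :=
    (hinf.diff ((Set.finite_singleton a).insert z |>.insert y |>.insert x)).nonempty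
  simp only [Set.mem_diff, Set.mem_insert_iff, Set.mem_singleton_iff, not_or] at hωn
  obtain ⟨hωx, hωy, hωz, hωa⟩ := hωn
  have key := hσ.2 ω x hx y hy z hz a ha (Ne.symm hωx) (Ne.symm hωy) (Ne.symm hωz)
    (Ne.symm hωa) hxy hxz hxa hyz hya hza hsep
  have hme := S.moebius_equivalent ω a x y z a (admissible_of_ne hxy hxz hyz)
  rw [crt_of_ne (S.dist ω) (Ne.symm hωx) (Ne.symm hωy) (Ne.symm hωz) (Ne.symm hωa),
    crt_last (S.dist a) hxa hya hza] at hme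
  obtain ⟨c, hc, e1, e2, e3⟩ := projEq_elim hme
  rw [e1, e2, e3, key]
  ring

private lemma inversion_pair {X : Type*} [TopologicalSpace X] (S : MoebiusStructure X)
    {φ : X → X} (hm : S.IsMoebiusMap φ) (hb : Function.Bijective φ) {a b : X}
    (hab : a ≠ b) (hφa : φ a = b) (hφb : φ b = a) {x y : X}
    (hxa : x ≠ a) (hxb : x ≠ b) (hya : y ≠ a) (hyb : y ≠ b) (hxy : x ≠ y) :
    ∃ c : ℝ, 0 < c ∧ S.dist a (φ x) (φ y) = c * S.dist a x y ∧
      S.dist a b (φ x) = c * S.dist a b y ∧ S.dist a b (φ y) = c * S.dist a b x := by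
  have hfx_a : φ x ≠ a := fun h => hxb (hb.1 (h.trans hφb.symm))
  have hfx_b : φ x ≠ b := fun h => hxa (hb.1 (h.trans hφa.symm))
  have hfy_a : φ y ≠ a := fun h => hyb (hb.1 (h.trans hφb.symm))
  have hfy_b : φ y ≠ b := fun h => hya (hb.1 (h.trans hφa.symm))
  have h := hm a a b x y (admissible_of_ne hab (Ne.symm hxa) (Ne.symm hxb))
  rw [hφa, hφb] at h
  rw [crt_first (S.dist a) (Ne.symm hab) hxa hya,
    crt_second (S.dist a) (Ne.symm hab) hfx_a hfy_a] at h
  obtain ⟨c, hc, e1, e2, e3⟩ := projEq_elim h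
  exact ⟨c, hc, e1, e2, e3⟩

/-- The main lemma: if two Ptolemy circles share three points, each is contained in
the other. -/
private lemma circles_subset {X : Type*} [TopologicalSpace X] [T2Space X]
    (S : MoebiusStructure X) (hSI : S.PropSI)
    {σ₁ σ₂ : Set X} (h₁ : S.IsPtolemyCircle σ₁) (h₂ : S.IsPtolemyCircle σ₂)
    {pa pb pc : X}
    (ha1 : pa ∈ σ₁) (ha2 : pa ∈ σ₂) (hb1 : pb ∈ σ₁) (hb2 : pb ∈ σ₂)
    (hc1 : pc ∈ σ₁) (hc2 : pc ∈ σ₂)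
    (hab : pa ≠ pb) (hac : pa ≠ pc) (hbc : pb ≠ pc) :
    σ₁ ⊆ σ₂ := by
  classical
  have hba : pb ≠ pa := Ne.symm hab
  have hca : pc ≠ pa := Ne.symm hac
  obtain ⟨E, γ, hγc, hγσ, hγa, hEγ, hγE, hEcont, hbdd, hsep⟩ := circle_coord h₁.1 ha1
  have hσcl : IsClosed σ₁ := (isCompact_circle h₁.1).isClosed
  have hinf : σ₁.Infinite := by
    apply Set.infinite_of_injective_forall_mem (f := γ) _ hγσ
    intro s t h
    have := congrArg E h
    rwa [hEγ, hEγ] at this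
  have dnn : ∀ x y : X, x ≠ pa → y ≠ pa → 0 ≤ S.dist pa x y := by
    intro x y hx hy
    by_cases hxy : x = y
    · rw [hxy, S.dist_self]
    · exact (S.dist_pos pa x y hx hy hxy).le
  have Einj : ∀ x y : X, x ∈ σ₁ → x ≠ pa → y ∈ σ₁ → y ≠ pa → E x = E y → x = y := by
    intro x y hx hxa hy hya h
    rw [← hγE x hx hxa, h, hγE y hy hya]
  have geo3 : ∀ x y z : X, x ∈ σ₁ → y ∈ σ₁ → z ∈ σ₁ → x ≠ pa → y ≠ pa → z ≠ pa →
      E x < E y → E y < E z → S.dist pa x z = S.dist pa x y + S.dist pa y z := by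
    intro x y z hx hy hz hxa hya hza h1 h2
    have hxy : x ≠ y := fun h => absurd h1 (by rw [h]; exact lt_irrefl _)
    have hyz : y ≠ z := fun h => absurd h2 (by rw [h]; exact lt_irrefl _)
    have hxz : x ≠ z := fun h => absurd (h1.trans h2) (by rw [h]; exact lt_irrefl _)
    exact geodesic S h₁ hinf ha1 hx hy hz hxa hya hza hxy hxz hyz
      (hsep x y z hx hy hz hxa hya hza h1 h2)
  -- the signed coordinate along the line σ₁ \ {pa}
  set F : X → ℝ := fun x => if E pb ≤ E x then S.dist pa pb x else -S.dist pa pb x with hFdef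
  have hFp : ∀ x, E pb ≤ E x → F x = S.dist pa pb x := by
    intro x h
    rw [hFdef]
    simp only [if_pos h]
  have hFn : ∀ x, ¬E pb ≤ E x → F x = -S.dist pa pb x := by
    intro x h
    rw [hFdef]
    simp only [if_neg h]
  have hFb : F pb = 0 := by rw [hFp pb le_rfl, S.dist_self]
  have Fle : ∀ x y : X, x ∈ σ₁ → x ≠ pa → y ∈ σ₁ → y ≠ pa → E x ≤ E y →
      S.dist pa x y = |F x - F y| := by
    intro x y hx hxa hy hya hle
    rcases eq_or_lt_of_le hle with he | hlt
    · rw [Einj x y hx hxa hy hya he, S.dist_self]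
      simp
    rcases lt_trichotomy (E pb) (E x) with hbx | hbx | hbx
    · have hgeo := geo3 pb x y hb1 hx hy hba hxa hya hbx hlt
      rw [hFp x hbx.le, hFp y (hbx.trans hlt).le, abs_sub_comm,
        abs_of_nonneg (by linarith [dnn x y hxa hya] :
          (0:ℝ) ≤ S.dist pa pb y - S.dist pa pb x)]
      linarith
    · have hxb : x = pb := Einj x pb hx hxa hb1 hba hbx.symm
      have hby : E pb ≤ E y := by rw [hbx]; exact hlt.le
      rw [hxb, hFb, hFp y hby, zero_sub, abs_neg,
        abs_of_nonneg (dnn pb y hba hya)]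
    · rcases lt_trichotomy (E y) (E pb) with hyb | hyb | hyb
      · have hgeo := geo3 x y pb hx hy hb1 hxa hya hba hlt hyb
        have hc1' := S.dist_comm pa x pb
        have hc2' := S.dist_comm pa y pb
        rw [hFn x (not_le.mpr (hlt.trans hyb)), hFn y (not_le.mpr hyb),
          show -S.dist pa pb x - -S.dist pa pb y = -(S.dist pa pb x - S.dist pa pb y) by ring,
          abs_neg, abs_of_nonneg (by linarith [dnn x y hxa hya] :
            (0:ℝ) ≤ S.dist pa pb x - S.dist pa pb y)]
        linarith
      · have hyb' : y = pb := Einj y pb hy hya hb1 hba hyb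
        have hxb' : ¬E pb ≤ E x := by rw [← hyb]; exact not_le.mpr hlt
        rw [hyb', hFb, hFn x hxb', sub_zero, abs_neg,
          abs_of_nonneg (dnn pb x hba hxa), S.dist_comm pa x pb]
      · have hgeo := geo3 x pb y hx hb1 hy hxa hba hya hbx hyb
        have hc1' := S.dist_comm pa x pb
        rw [hFn x (not_le.mpr hbx), hFp y hyb.le,
          show -S.dist pa pb x - S.dist pa pb y = -(S.dist pa pb x + S.dist pa pb y) by ring,
          abs_neg, abs_of_nonneg (add_nonneg (dnn pb x hba hxa) (dnn pb y hba hya))]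
        linarith
  have FISO : ∀ x y : X, x ∈ σ₁ → x ≠ pa → y ∈ σ₁ → y ≠ pa →
      S.dist pa x y = |F x - F y| := by
    intro x y hx hxa hy hya
    rcases le_total (E x) (E y) with h | h
    · exact Fle x y hx hxa hy hya h
    · rw [S.dist_comm pa x y, abs_sub_comm]
      exact Fle y x hy hya hx hxa h
  have FINJ : ∀ x y : X, x ∈ σ₁ → x ≠ pa → y ∈ σ₁ → y ≠ pa → F x = F y → x = y := by
    intro x y hx hxa hy hya h
    by_contra hne
    have hpos := S.dist_pos pa x y hxa hya hne
    rw [FISO x y hx hxa hy hya, h] at hpos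
    simp at hpos
  -- continuity of distances
  have DCONT : ∀ q : X, q ≠ pa → ∀ x : X, x ≠ pa →
      ContinuousAt (fun y => S.dist pa q y) x := by
    intro q hq x hx
    rw [ContinuousAt, Metric.tendsto_nhds]
    intro ε hε
    have hW : IsOpen ({y | y ≠ pa ∧ S.dist pa q y < S.dist pa q x + ε} ∩
        ({y | y ≠ pa ∧ S.dist pa q x - ε < S.dist pa q y} ∪ {pa})) :=
      (S.isOpen_ball pa q (S.dist pa q x + ε) hq).inter
        (S.isOpen_compl_closedBall pa q (S.dist pa q x - ε) hq)
    have hxW : x ∈ ({y | y ≠ pa ∧ S.dist pa q y < S.dist pa q x + ε} ∩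
        ({y | y ≠ pa ∧ S.dist pa q x - ε < S.dist pa q y} ∪ {pa})) :=
      ⟨⟨hx, by linarith⟩, Or.inl ⟨hx, by linarith⟩⟩
    filter_upwards [hW.mem_nhds hxW] with y hy
    obtain ⟨⟨hy1, hy2⟩, hy3⟩ := hy
    rcases hy3 with ⟨-, hy4⟩ | hy5
    · rw [Real.dist_eq, abs_lt]
      constructor <;> linarith
    · exact absurd (Set.mem_singleton_iff.mp hy5) hy1
  -- every distance value is attained on the line
  have ATTAIN : ∀ q : X, q ∈ σ₁ → q ≠ pa → ∀ ρ : ℝ, 0 < ρ →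
      ∃ s, s ∈ σ₁ ∧ s ≠ pa ∧ S.dist pa q s = ρ := by
    intro q hq hqa ρ hρ
    have hgc : Continuous (fun t => S.dist pa q (γ t)) :=
      continuous_iff_continuousAt.mpr fun t => (DCONT q hqa (γ t) (hγa t)).comp hγc.continuousAt
    have hg0 : S.dist pa q (γ (E q)) = 0 := by rw [hγE q hq hqa, S.dist_self]
    have hUo : IsOpen ({y | y ≠ pa ∧ ρ < S.dist pa q y} ∪ {pa}) :=
      S.isOpen_compl_closedBall pa q ρ hqa
    have hKcl : IsClosed (σ₁ \ ({y | y ≠ pa ∧ ρ < S.dist pa q y} ∪ {pa})) := by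
      rw [Set.diff_eq]
      exact hσcl.inter hUo.isClosed_compl
    obtain ⟨⟨Bd, hBd⟩, -⟩ := hbdd (σ₁ \ ({y | y ≠ pa ∧ ρ < S.dist pa q y} ∪ {pa}))
      Set.diff_subset (fun h => h.2 (Set.mem_union_right _ rfl)) hKcl
    set t₁ := max (Bd + 1) (E q + 1) with ht₁
    have hm : γ t₁ ∈ ({y | y ≠ pa ∧ ρ < S.dist pa q y} ∪ {pa}) := by
      by_contra h
      have hmem : γ t₁ ∈ σ₁ \ ({y | y ≠ pa ∧ ρ < S.dist pa q y} ∪ {pa}) := ⟨hγσ t₁, h⟩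
      have h2 := hBd (Set.mem_image_of_mem E hmem)
      rw [hEγ] at h2
      have h3 : Bd + 1 ≤ t₁ := le_max_left _ _
      linarith
    have hρt₁ : ρ < S.dist pa q (γ t₁) := by
      rcases hm with ⟨-, h⟩ | h
      · exact h
      · exact absurd (Set.mem_singleton_iff.mp h) (hγa t₁)
    have ht01 : E q ≤ t₁ := le_trans (by linarith) (le_max_right _ _)
    obtain ⟨t, -, hgt⟩ := intermediate_value_Ioc ht01 hgc.continuousOn
      (Set.mem_Ioc.mpr ⟨by rw [hg0]; exact hρ, hρt₁.le⟩)
    exact ⟨γ t, hγσ t, hγa t, hgt⟩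
  -- F is surjective onto ℝ
  have FSURJ : ∀ τ : ℝ, ∃ x, x ∈ σ₁ ∧ x ≠ pa ∧ F x = τ := by
    intro τ
    rcases lt_trichotomy τ 0 with hτ | hτ | hτ
    · -- negative values: go to the left of pb
      have hgc : Continuous (fun t => S.dist pa pb (γ t)) :=
        continuous_iff_continuousAt.mpr fun t =>
          (DCONT pb hba (γ t) (hγa t)).comp hγc.continuousAt
      have hg0 : S.dist pa pb (γ (E pb)) = 0 := by rw [hγE pb hb1 hba, S.dist_self]
      have hUo : IsOpen ({y | y ≠ pa ∧ -τ < S.dist pa pb y} ∪ {pa}) :=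
        S.isOpen_compl_closedBall pa pb (-τ) hba
      have hKcl : IsClosed (σ₁ \ ({y | y ≠ pa ∧ -τ < S.dist pa pb y} ∪ {pa})) := by
        rw [Set.diff_eq]
        exact hσcl.inter hUo.isClosed_compl
      obtain ⟨-, ⟨Bd, hBd⟩⟩ := hbdd (σ₁ \ ({y | y ≠ pa ∧ -τ < S.dist pa pb y} ∪ {pa}))
        Set.diff_subset (fun h => h.2 (Set.mem_union_right _ rfl)) hKcl
      set t₂ := min (Bd - 1) (E pb - 1) with ht₂
      have hm : γ t₂ ∈ ({y | y ≠ pa ∧ -τ < S.dist pa pb y} ∪ {pa}) := by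
        by_contra h
        have hmem : γ t₂ ∈ σ₁ \ ({y | y ≠ pa ∧ -τ < S.dist pa pb y} ∪ {pa}) := ⟨hγσ t₂, h⟩
        have h2 := hBd (Set.mem_image_of_mem E hmem)
        rw [hEγ] at h2
        have h3 : t₂ ≤ Bd - 1 := min_le_left _ _
        linarith
      have hρt₂ : -τ < S.dist pa pb (γ t₂) := by
        rcases hm with ⟨-, h⟩ | h
        · exact h
        · exact absurd (Set.mem_singleton_iff.mp h) (hγa t₂)
      have ht20 : t₂ ≤ E pb := le_trans (min_le_right _ _) (by linarith)
      obtain ⟨t, htm, hgt⟩ := intermediate_value_Ico' ht20 hgc.continuousOn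
        (Set.mem_Ioc.mpr ⟨by rw [hg0]; linarith, hρt₂.le⟩)
      refine ⟨γ t, hγσ t, hγa t, ?_⟩
      have hgt' : S.dist pa pb (γ t) = -τ := hgt
      rw [hFn (γ t) (by rw [hEγ]; exact not_le.mpr htm.2), hgt']
      ring
    · exact ⟨pb, hb1, hba, by rw [hFb]; exact hτ.symm⟩
    · -- positive values: go to the right of pb
      have hgc : Continuous (fun t => S.dist pa pb (γ t)) :=
        continuous_iff_continuousAt.mpr fun t =>
          (DCONT pb hba (γ t) (hγa t)).comp hγc.continuousAt
      have hg0 : S.dist pa pb (γ (E pb)) = 0 := by rw [hγE pb hb1 hba, S.dist_self]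
      have hUo : IsOpen ({y | y ≠ pa ∧ τ < S.dist pa pb y} ∪ {pa}) :=
        S.isOpen_compl_closedBall pa pb τ hba
      have hKcl : IsClosed (σ₁ \ ({y | y ≠ pa ∧ τ < S.dist pa pb y} ∪ {pa})) := by
        rw [Set.diff_eq]
        exact hσcl.inter hUo.isClosed_compl
      obtain ⟨⟨Bd, hBd⟩, -⟩ := hbdd (σ₁ \ ({y | y ≠ pa ∧ τ < S.dist pa pb y} ∪ {pa}))
        Set.diff_subset (fun h => h.2 (Set.mem_union_right _ rfl)) hKcl
      set t₁ := max (Bd + 1) (E pb + 1) with ht₁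
      have hm : γ t₁ ∈ ({y | y ≠ pa ∧ τ < S.dist pa pb y} ∪ {pa}) := by
        by_contra h
        have hmem : γ t₁ ∈ σ₁ \ ({y | y ≠ pa ∧ τ < S.dist pa pb y} ∪ {pa}) := ⟨hγσ t₁, h⟩
        have h2 := hBd (Set.mem_image_of_mem E hmem)
        rw [hEγ] at h2
        have h3 : Bd + 1 ≤ t₁ := le_max_left _ _
        linarith
      have hρt₁ : τ < S.dist pa pb (γ t₁) := by
        rcases hm with ⟨-, h⟩ | h
        · exact h
        · exact absurd (Set.mem_singleton_iff.mp h) (hγa t₁)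
      have ht01 : E pb ≤ t₁ := le_trans (by linarith) (le_max_right _ _)
      obtain ⟨t, htm, hgt⟩ := intermediate_value_Ioc ht01 hgc.continuousOn
        (Set.mem_Ioc.mpr ⟨by rw [hg0]; exact hτ, hρt₁.le⟩)
      refine ⟨γ t, hγσ t, hγa t, ?_⟩
      have hgt' : S.dist pa pb (γ t) = τ := hgt
      rw [hFp (γ t) (by rw [hEγ]; exact htm.1.le), hgt']
  -- inversions with prescribed constant
  have INVK : ∀ q : X, q ∈ σ₁ → q ∈ σ₂ → q ≠ pa → ∀ κ : ℝ, 0 < κ →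
      ∃ φ : X → X, Function.Bijective φ ∧ φ pa = q ∧ φ q = pa ∧
        φ '' σ₁ = σ₁ ∧ φ '' σ₂ = σ₂ ∧ S.IsMoebiusMap φ ∧
        ∀ x, x ≠ pa → x ≠ q → S.dist pa q (φ x) * S.dist pa q x = κ := by
    intro q hq1 hq2 hqa κ hκ
    obtain ⟨s, hsσ, hsa, hds⟩ := ATTAIN q hq1 hqa (Real.sqrt κ) (Real.sqrt_pos.mpr hκ)
    have hsq : s ≠ q := by
      intro h
      rw [h, S.dist_self] at hds
      exact absurd hds.symm (ne_of_gt (Real.sqrt_pos.mpr hκ))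
    have hr : 0 < S.dist q pa s :=
      S.dist_pos q pa s (Ne.symm hqa) hsq (fun h => hsa h.symm)
    obtain ⟨φ, hmob, hbij, -, hφa, hφq, hfix, hcirc⟩ :=
      hSI pa q (fun h => hqa h.symm) {x | x ≠ q ∧ S.dist q pa x = S.dist q pa s}
        ⟨S.dist q pa s, hr, rfl⟩
    have hφs : φ s = s := hfix s ⟨hsq, rfl⟩
    refine ⟨φ, hbij, hφa, hφq, hcirc σ₁ h₁ ha1 hq1, hcirc σ₂ h₂ ha2 hq2, hmob, ?_⟩
    intro x hxa hxq
    by_cases hxs : x = s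
    · subst hxs
      rw [hφs, hds]
      exact Real.mul_self_sqrt hκ.le
    · obtain ⟨c, hc, e1, e2, e3⟩ := inversion_pair S hmob hbij (fun h => hqa h.symm)
        hφa hφq hxa hxq hsa hsq hxs
      rw [hφs, hds] at e3
      rw [e2, hds]
      calc c * Real.sqrt κ * S.dist pa q x = c * S.dist pa q x * Real.sqrt κ := by ring
      _ = Real.sqrt κ * Real.sqrt κ := by rw [← e3]
      _ = κ := Real.mul_self_sqrt hκ.le
  -- homotheties of every ratio fixing pa and q
  have HOM : ∀ q : X, q ∈ σ₁ → q ∈ σ₂ → q ≠ pa → ∀ lam : ℝ, 0 < lam →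
      ∃ ψ : X → X, Function.Bijective ψ ∧ ψ pa = pa ∧ ψ q = q ∧
        ψ '' σ₁ = σ₁ ∧ ψ '' σ₂ = σ₂ ∧
        ∀ x y, x ≠ pa → y ≠ pa → S.dist pa (ψ x) (ψ y) = lam * S.dist pa x y := by
    intro q hq1 hq2 hqa lam hlam
    obtain ⟨φ₁, hb₁, ha₁, hq₁, hi₁, hj₁, hmob₁, hK₁⟩ := INVK q hq1 hq2 hqa 1 one_pos
    obtain ⟨φ₂, hb₂, ha₂, hq₂, hi₂, hj₂, hmob₂, hK₂⟩ := INVK q hq1 hq2 hqa lam hlam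
    have hstay : ∀ x, x ≠ pa → x ≠ q → φ₁ x ≠ pa ∧ φ₁ x ≠ q := by
      intro x hxa hxq
      constructor
      · intro h
        exact hxq (hb₁.1 (h.trans hq₁.symm))
      · intro h
        exact hxa (hb₁.1 (h.trans ha₁.symm))
    have hscq : ∀ w, w ≠ pa → w ≠ q → S.dist pa q (φ₂ (φ₁ w)) = lam * S.dist pa q w := by
      intro w hwa hwq
      have h1 := hK₁ w hwa hwq
      have h2 := hK₂ (φ₁ w) (hstay w hwa hwq).1 (hstay w hwa hwq).2
      calc S.dist pa q (φ₂ (φ₁ w))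
          = S.dist pa q (φ₂ (φ₁ w)) * (S.dist pa q (φ₁ w) * S.dist pa q w) := by
            rw [h1]; ring
        _ = (S.dist pa q (φ₂ (φ₁ w)) * S.dist pa q (φ₁ w)) * S.dist pa q w := by ring
        _ = lam * S.dist pa q w := by rw [h2]
    refine ⟨fun x => φ₂ (φ₁ x), hb₂.comp hb₁, by simp [ha₁, hq₂], by simp [hq₁, ha₂],
      ?_, ?_, ?_⟩
    · rw [show (fun x => φ₂ (φ₁ x)) = φ₂ ∘ φ₁ from rfl, Set.image_comp, hi₁, hi₂]
    · rw [show (fun x => φ₂ (φ₁ x)) = φ₂ ∘ φ₁ from rfl, Set.image_comp, hj₁, hj₂]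
    · intro x y hxa hya
      by_cases hxy : x = y
      · rw [hxy, S.dist_self, S.dist_self, mul_zero]
      by_cases hxq : x = q
      · by_cases hyq : y = q
        · exact absurd (hxq.trans hyq.symm) hxy
        have h := hscq y hya hyq
        show S.dist pa (φ₂ (φ₁ x)) (φ₂ (φ₁ y)) = lam * S.dist pa x y
        rw [hxq, hq₁, ha₂]
        exact h
      by_cases hyq : y = q
      · have h := hscq x hxa hxq
        show S.dist pa (φ₂ (φ₁ x)) (φ₂ (φ₁ y)) = lam * S.dist pa x y
        rw [hyq, hq₁, ha₂, S.dist_comm pa (φ₂ (φ₁ x)) q, S.dist_comm pa x q]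
        exact h
      · have hx' := hstay x hxa hxq
        have hy' := hstay y hya hyq
        obtain ⟨c₁, hc₁, e₁, e₂, e₃⟩ := inversion_pair S hmob₁ hb₁ (fun h => hqa h.symm)
          ha₁ hq₁ hxa hxq hya hyq hxy
        obtain ⟨c₂, hc₂, f₁, f₂, f₃⟩ := inversion_pair S hmob₂ hb₂ (fun h => hqa h.symm)
          ha₂ hq₂ hx'.1 hx'.2 hy'.1 hy'.2 (fun h => hxy (hb₁.1 h))
        have H1 := hK₂ (φ₁ x) hx'.1 hx'.2
        rw [f₂, e₃, e₂] at H1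
        have H2 := hK₁ x hxa hxq
        rw [e₂] at H2
        have hcc : c₂ * c₁ = lam := by linear_combination H1 - c₂ * c₁ * H2
        simp only []
        rw [f₁, e₁, show c₂ * (c₁ * S.dist pa x y) = c₂ * c₁ * S.dist pa x y by ring, hcc]
  -- squared homotheties scale the coordinate F
  have SGN2 : ∀ q : X, q ∈ σ₁ → q ∈ σ₂ → q ≠ pa → ∀ lam : ℝ, 0 < lam →
      ∃ Ψ : X → X, (∀ x, x ∈ σ₁ → Ψ x ∈ σ₁) ∧ (∀ x, x ∈ σ₂ → Ψ x ∈ σ₂) ∧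
        (∀ x, x ≠ pa → Ψ x ≠ pa) ∧
        ∀ x, x ∈ σ₁ → x ≠ pa → F (Ψ x) - F q = lam * (F x - F q) := by
    intro q hq1 hq2 hqa lam hlam
    have hl : 0 < Real.sqrt lam := Real.sqrt_pos.mpr hlam
    obtain ⟨ψ, hbij, hψa, hψq, hψ1, hψ2, hsc⟩ := HOM q hq1 hq2 hqa (Real.sqrt lam) hl
    set l := Real.sqrt lam with hldef
    have hm1 : ∀ x, x ∈ σ₁ → ψ x ∈ σ₁ := by
      intro x hx
      rw [← hψ1]
      exact Set.mem_image_of_mem ψ hx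
    have hm2 : ∀ x, x ∈ σ₂ → ψ x ∈ σ₂ := by
      intro x hx
      rw [← hψ2]
      exact Set.mem_image_of_mem ψ hx
    have hma : ∀ x, x ≠ pa → ψ x ≠ pa := by
      intro x hx h
      exact hx (hbij.1 (h.trans hψa.symm))
    have hFψ : ∀ x y, x ∈ σ₁ → x ≠ pa → y ∈ σ₁ → y ≠ pa →
        |F (ψ x) - F (ψ y)| = l * |F x - F y| := by
      intro x y hx hxa hy hya
      rw [← FISO (ψ x) (ψ y) (hm1 x hx) (hma x hxa) (hm1 y hy) (hma y hya),
        hsc x y hxa hya, FISO x y hx hxa hy hya]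
    obtain ⟨x₁, hx₁σ, hx₁a, hFx₁⟩ := FSURJ (F q + 1)
    have h1 : |F (ψ x₁) - F q| = l := by
      have h := hFψ x₁ q hx₁σ hx₁a hq1 hqa
      rw [hψq, hFx₁] at h
      simpa using h
    have branch : ∀ sg : ℝ, sg * sg = 1 → F (ψ x₁) - F q = sg * l →
        ∀ x, x ∈ σ₁ → x ≠ pa → F (ψ x) - F q = sg * (l * (F x - F q)) := by
      intro sg hsg2 hεs x hx hxa
      by_cases hxq : x = q
      · subst hxq
        rw [hψq]
        simp
      have hu0 : F x - F q ≠ 0 :=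
        sub_ne_zero.mpr (fun h => hxq (FINJ x q hx hxa hq1 hqa h))
      have h2 : |F (ψ x) - F q| = |l * (F x - F q)| := by
        have h := hFψ x q hx hxa hq1 hqa
        rw [hψq] at h
        rw [h, abs_mul, abs_of_pos hl]
      have h3 : |(F (ψ x) - F q) - (F (ψ x₁) - F q)| = l * |(F x - F q) - 1| := by
        have h := hFψ x x₁ hx hxa hx₁σ hx₁a
        rw [hFx₁] at h
        calc |(F (ψ x) - F q) - (F (ψ x₁) - F q)| = |F (ψ x) - F (ψ x₁)| := by ring_nf
        _ = l * |F x - (F q + 1)| := h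
        _ = l * |(F x - F q) - 1| := by ring_nf
      have hsgn : sg = 1 ∨ sg = -1 := mul_self_eq_one_iff.mp hsg2
      rcases abs_eq_abs.mp h2 with hA | hA
      · rcases hsgn with rfl | rfl
        · rw [hA]; ring
        · exfalso
          rw [hA, hεs] at h3
          have h4 : |(F x - F q) + 1| = |(F x - F q) - 1| := by
            have h5 : |l * (F x - F q) - -1 * l| = l * |(F x - F q) + 1| := by
              rw [show l * (F x - F q) - -1 * l = l * ((F x - F q) + 1) by ring,
                abs_mul, abs_of_pos hl]
            rw [h5] at h3
            exact mul_left_cancel₀ hl.ne' h3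
          rcases abs_eq_abs.mp h4 with h6 | h6
          · linarith
          · exact hu0 (by linarith)
      · rcases hsgn with rfl | rfl
        · exfalso
          rw [hA, hεs] at h3
          have h4 : |(F x - F q) + 1| = |(F x - F q) - 1| := by
            have h5 : |-(l * (F x - F q)) - 1 * l| = l * |(F x - F q) + 1| := by
              rw [show -(l * (F x - F q)) - 1 * l = -(l * ((F x - F q) + 1)) by ring,
                abs_neg, abs_mul, abs_of_pos hl]
            rw [h5] at h3
            exact mul_left_cancel₀ hl.ne' h3
          rcases abs_eq_abs.mp h4 with h6 | h6
          · linarith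
          · exact hu0 (by linarith)
        · rw [hA]; ring
    obtain ⟨sg, hsg2, hεs⟩ : ∃ sg : ℝ, sg * sg = 1 ∧ F (ψ x₁) - F q = sg * l := by
      rcases (abs_eq hl.le).mp h1 with h | h
      · exact ⟨1, by ring, by rw [h]; ring⟩
      · exact ⟨-1, by ring, by rw [h]; ring⟩
    have hsgn := branch sg hsg2 hεs
    refine ⟨fun x => ψ (ψ x), fun x hx => hm1 _ (hm1 x hx), fun x hx => hm2 _ (hm2 x hx),
      fun x hx => hma _ (hma x hx), fun x hx hxa => ?_⟩
    have e1 := hsgn x hx hxa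
    have e2 := hsgn (ψ x) (hm1 x hx) (hma x hxa)
    calc F (ψ (ψ x)) - F q = sg * (l * (F (ψ x) - F q)) := e2
    _ = sg * (l * (sg * (l * (F x - F q)))) := by rw [e1]
    _ = (sg * sg) * ((l * l) * (F x - F q)) := by ring
    _ = lam * (F x - F q) := by rw [hsg2, hldef, Real.mul_self_sqrt hlam.le, one_mul]
  -- every real value of F is attained inside σ₁ ∩ σ₂
  have hFc : F pc ≠ 0 := by
    intro h
    exact hbc (FINJ pb pc hb1 hba hc1 hca (by rw [hFb, h]))
  have COVER : ∀ τ : ℝ, ∃ t, t ∈ σ₁ ∧ t ≠ pa ∧ t ∈ σ₂ ∧ F t = τ := by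
    intro τ
    by_cases hτ : τ = 0
    · exact ⟨pb, hb1, hba, hb2, by rw [hFb, hτ]⟩
    by_cases hpos : 0 < τ / F pc
    · obtain ⟨Ψ, hΨ1, hΨ2, hΨa, hΨF⟩ := SGN2 pb hb1 hb2 hba (τ / F pc) hpos
      refine ⟨Ψ pc, hΨ1 pc hc1, hΨa pc hca, hΨ2 pc hc2, ?_⟩
      have h := hΨF pc hc1 hca
      rw [hFb, sub_zero, sub_zero] at h
      rw [h, div_mul_cancel₀ τ hFc]
    · have hlam : 0 < 1 - τ / F pc := by
        have hle : τ / F pc ≤ 0 := not_lt.mp hpos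
        have hne0 : τ / F pc ≠ 0 := div_ne_zero hτ hFc
        have : τ / F pc < 0 := lt_of_le_of_ne hle hne0
        linarith
      obtain ⟨Ψ, hΨ1, hΨ2, hΨa, hΨF⟩ := SGN2 pc hc1 hc2 hca (1 - τ / F pc) hlam
      refine ⟨Ψ pb, hΨ1 pb hb1, hΨa pb hba, hΨ2 pb hb2, ?_⟩
      have h := hΨF pb hb1 hba
      rw [hFb] at h
      have hrhs : (1 - τ / F pc) * (0 - F pc) = τ - F pc := by
        field_simp
        ring
      rw [hrhs] at h
      linarith
  -- conclusion
  intro x hx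
  by_cases hxa : x = pa
  · rw [hxa]
    exact ha2
  obtain ⟨t, ht1, hta, ht2, hFt⟩ := COVER (F x)
  have : x = t := FINJ x t hx hxa ht1 hta hFt.symm
  rw [this]
  exact ht2

/-- in a compact Ptolemy space with properties (E) and (sI), two distinct
Ptolemy circles have at most two points in common. -/
theorem distinct_ptolemy_circles_meet_in_at_most_two_points
    {X : Type*} [TopologicalSpace X] [CompactSpace X] [T2Space X]
    (S : MoebiusStructure X) (hE : S.PropE) (hSI : S.PropSI)
    (σ₁ σ₂ : Set X) (h₁ : S.IsPtolemyCircle σ₁) (h₂ : S.IsPtolemyCircle σ₂)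
    (hne : σ₁ ≠ σ₂) :
    ¬ ∃ a b c : X, a ∈ σ₁ ∩ σ₂ ∧ b ∈ σ₁ ∩ σ₂ ∧ c ∈ σ₁ ∩ σ₂ ∧
      a ≠ b ∧ a ≠ c ∧ b ≠ c := by
  rintro ⟨qa, qb, qc, hqa, hqb, hqc, hab, hac, hbc⟩
  exact hne (Set.Subset.antisymm
    (circles_subset S hSI h₁ h₂ hqa.1 hqa.2 hqb.1 hqb.2 hqc.1 hqc.2 hab hac hbc)
    (circles_subset S hSI h₂ h₁ hqa.2 hqa.1 hqb.2 hqb.1 hqc.2 hqc.1 hab hac hbc))
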